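/- Let (K,v) be a valued field of residue characteristic p > 0 such that K has no separable field extension of degree divisible by p. Then the residue field Kv is perfect. -/

import Mathlib

universe u

open Polynomial

open Polynomial

lemma key_div {k : Type*} [Field k] (p : ℕ) [Fact p.Prime] [CharP k p] (x : k)
    (g : k[X]) (hg : g.Monic) (hd0 : 0 < g.natDegree) (hdp : g.natDegree < p)
    (hdvd : g ∣ X ^ p - C x) : ∃ y : k, y ^ p = x := by
  have hp0 : 0 < p := (Fact.out : p.Prime).pos
  by_cases hx : x = 0
  · exact ⟨0, by rw [zero_pow hp0.ne', hx]⟩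
  set d := g.natDegree with hd
  let k' := AlgebraicClosure k
  let φ := algebraMap k k'
  haveI : CharP k' p := charP_of_injective_algebraMap (algebraMap k k').injective p
  obtain ⟨b, hbx⟩ := IsAlgClosed.exists_pow_nat_eq (φ x) hp0
  have hb0 : b ≠ 0 := by
    intro h
    apply hx
    have h2 : φ x = 0 := by rw [← hbx, h, zero_pow hp0.ne']
    exact (_root_.map_eq_zero φ).mp h2
  have hfact : (X ^ p - C x : k[X]).map φ = (X - C b) ^ p := by
    rw [Polynomial.map_sub, Polynomial.map_pow, map_X, map_C, ← hbx, map_pow, sub_pow_char]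
  have hgdvd : g.map φ ∣ (X - C b) ^ p := by
    rw [← hfact]; exact Polynomial.map_dvd φ hdvd
  have hgm : (g.map φ).Monic := hg.map φ
  have hsplits : (g.map φ).Splits := IsAlgClosed.splits _
  have hroots : (g.map φ).roots = Multiset.replicate d b := by
    refine Multiset.eq_replicate.mpr ⟨?_, ?_⟩
    · rw [(Polynomial.splits_iff_card_roots).mp hsplits, natDegree_map]
    · intro r hr
      have hr' : (g.map φ).IsRoot r := isRoot_of_mem_roots hr
      obtain ⟨q, hq⟩ := hgdvd
      have h3 : ((r : k') - b) ^ p = 0 := by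
        have h4 := congrArg (eval r) hq
        rw [eval_pow, eval_sub, eval_X, eval_C, eval_mul, hr'.eq_zero, zero_mul] at h4
        exact h4
      exact sub_eq_zero.mp (pow_eq_zero_iff hp0.ne' |>.mp h3)
  have hgeq : g.map φ = (X - C b) ^ d := by
    have h5 := hsplits.eq_prod_roots_of_monic hgm
    rw [hroots] at h5
    simpa [Multiset.map_replicate, Multiset.prod_replicate] using h5
  have he : φ ((-1 : k) ^ d * g.eval 0) = b ^ d := by
    have h6 : (g.map φ).eval 0 = φ (g.eval 0) := by
      rw [eval_map, eval₂_at_zero, coeff_zero_eq_eval_zero]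
    have h7 : φ (g.eval 0) = (-1) ^ d * b ^ d := by
      rw [← h6, hgeq, eval_pow, eval_sub, eval_X, eval_C, zero_sub, neg_pow]
    rw [map_mul, h7, map_pow, map_neg, map_one, ← mul_assoc, ← mul_pow,
      neg_mul_neg, one_mul, one_pow, one_mul]
  have he0 : ((-1 : k) ^ d * g.eval 0) ≠ 0 := by
    intro h
    rw [h, map_zero] at he
    exact pow_ne_zero d hb0 he.symm
  -- Bezout coefficients
  have hcop : Nat.gcd d p = 1 := by
    have hnd : ¬ p ∣ d := fun hdvd' => absurd (Nat.le_of_dvd hd0 hdvd') (not_le.mpr hdp)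
    exact Nat.Coprime.gcd_eq_one (((Fact.out : p.Prime).coprime_iff_not_dvd.mpr hnd).symm)
  obtain ⟨u, w, huw⟩ : ∃ u w : ℤ, (d : ℤ) * u + (p : ℤ) * w = 1 :=
    ⟨Nat.gcdA d p, Nat.gcdB d p, by rw [← Nat.gcd_eq_gcd_ab, hcop]; norm_num⟩
  refine ⟨((-1 : k) ^ d * g.eval 0) ^ u * x ^ w, ?_⟩
  apply φ.injective
  rw [map_pow, map_mul, map_zpow₀, map_zpow₀, he]
  have hφx : φ x = b ^ (p : ℤ) := by rw [← hbx, zpow_natCast]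
  have hbd : (b ^ d : k') = b ^ (d : ℤ) := (zpow_natCast b d).symm
  rw [hφx, hbd, ← zpow_mul, ← zpow_mul, ← zpow_add₀ hb0, ← zpow_natCast (b ^ ((d:ℤ)*u + (p:ℤ)*w)) p]
  rw [huw]
  simp [hφx]

open Polynomial

lemma monic_factorization {R : Type*} [CommRing R] [IsDomain R] {f : R[X]} (hf : f.Monic)
    (hnu : ¬ IsUnit f) (hni : ¬ Irreducible f) :
    ∃ g h : R[X], f = g * h ∧ g.Monic ∧ h.Monic ∧ 0 < g.natDegree ∧ 0 < h.natDegree := by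
  rw [irreducible_iff] at hni
  push_neg at hni
  obtain ⟨a, b, hab, hua, hub⟩ := hni hnu
  have hlead : a.leadingCoeff * b.leadingCoeff = 1 := by
    rw [← leadingCoeff_mul, ← hab, hf.leadingCoeff]
  have hua' : IsUnit a.leadingCoeff := IsUnit.of_mul_eq_one _ hlead
  have hub' : IsUnit b.leadingCoeff := IsUnit.of_mul_eq_one _ (by rwa [mul_comm] at hlead)
  have ha0 : a ≠ 0 := fun h => hf.ne_zero (by rw [hab, h, zero_mul])
  have hb0 : b ≠ 0 := fun h => hf.ne_zero (by rw [hab, h, mul_zero])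
  refine ⟨C b.leadingCoeff * a, C a.leadingCoeff * b, ?_, ?_, ?_, ?_, ?_⟩
  · rw [mul_mul_mul_comm, ← C_mul, mul_comm b.leadingCoeff, hlead, C_1, one_mul, hab]
  · unfold Monic
    rw [leadingCoeff_mul, leadingCoeff_C, mul_comm]
    exact hlead
  · unfold Monic
    rw [leadingCoeff_mul, leadingCoeff_C]
    exact hlead
  · have hmon : (C b.leadingCoeff * a).Monic := by
      unfold Monic; rw [leadingCoeff_mul, leadingCoeff_C, mul_comm]; exact hlead
    rcases Nat.eq_zero_or_pos (C b.leadingCoeff * a).natDegree with h | h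
    swap
    · exact h
    · exfalso
      apply hua
      have : C b.leadingCoeff * a = 1 := hmon.natDegree_eq_zero.mp h
      have : a = C a.leadingCoeff * 1 := by
        rw [← this, ← mul_assoc, ← C_mul, hlead, C_1, one_mul]
      rw [mul_one] at this
      rw [this]
      exact hua'.map C
  · have hmon : (C a.leadingCoeff * b).Monic := by
      unfold Monic; rw [leadingCoeff_mul, leadingCoeff_C]; exact hlead
    rcases Nat.eq_zero_or_pos (C a.leadingCoeff * b).natDegree with h | h
    swap
    · exact h
    · exfalso
      apply hub
      have : C a.leadingCoeff * b = 1 := hmon.natDegree_eq_zero.mp h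
      have hb : b = C b.leadingCoeff * 1 := by
        rw [← this, ← mul_assoc, ← C_mul, mul_comm b.leadingCoeff, hlead, C_1, one_mul]
      rw [mul_one] at hb
      rw [hb]
      exact hub'.map C

open Polynomial


lemma valuationSubring_integers {K : Type u} [Field K] (O : ValuationSubring K) :
    Valuation.Integers O.valuation O :=
  { hom_inj := Subtype.coe_injective
    map_le_one := fun x => O.valuation_le_one x
    exists_of_le_one := fun r hr => ⟨⟨r, O.mem_of_valuation_le_one r hr⟩, rfl⟩ }

lemma main_aux {K : Type u} [Field K] (O : ValuationSubring K) (p : ℕ) [Fact p.Prime]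
    [CharP (IsLocalRing.ResidueField O) p]
    (hsep : ∀ (L : Type u) [Field L] [Algebra K L] [Algebra.IsSeparable K L]
      [FiniteDimensional K L], ¬ p ∣ Module.finrank K L)
    (x : IsLocalRing.ResidueField O) (f : (↥O)[X]) (hm : f.Monic) (hdeg : f.natDegree = p)
    (hfs : (f.map (algebraMap (↥O) K)).Separable)
    (hred : f.map (IsLocalRing.residue ↥O) = X ^ p - C x) : ∃ y, y ^ p = x := by
  have hp : p.Prime := Fact.out
  haveI : IsIntegrallyClosed ↥O := (valuationSubring_integers O).isIntegrallyClosed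
  set fK := f.map (algebraMap (↥O) K) with hfK
  have hfKm : fK.Monic := hm.map _
  have hfKdeg : fK.natDegree = p := by rw [hfK, hm.natDegree_map]; exact hdeg
  -- fK is not irreducible
  have hKni : ¬ Irreducible fK := by
    intro hirr
    let L := fK.SplittingField
    haveI : IsGalois K L := IsGalois.of_separable_splitting_field hfs
    obtain ⟨r, hr⟩ := (SplittingField.splits fK).exists_eval_eq_zero (by
        rw [degree_map, degree_eq_natDegree hfKm.ne_zero, hfKdeg]
        simp [hp.ne_zero])
    rw [eval_map_algebraMap] at hr
    have hint : IsIntegral K r := IsIntegral.of_finite K r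
    have hmin : minpoly K r = fK :=
      (minpoly.eq_of_irreducible_of_monic hirr hr hfKm).symm
    have hdvd : (minpoly K r).natDegree ∣ Module.finrank K L := minpoly.degree_dvd hint
    rw [hmin, hfKdeg] at hdvd
    exact hsep L hdvd
  have hnu : ¬ IsUnit f := by
    intro h
    have := natDegree_eq_zero_of_isUnit h
    rw [hdeg] at this
    exact hp.ne_zero this
  have hni : ¬ Irreducible f :=
    fun h => hKni ((hm.irreducible_iff_irreducible_map_fraction_map).mp h)
  obtain ⟨g, h, hgh, hgm, hhm, hg0, hh0⟩ := monic_factorization hm hnu hni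
  have hsum : g.natDegree + h.natDegree = p := by
    rw [← hdeg, hgh, hgm.natDegree_mul hhm]
  have hglt : g.natDegree < p := by omega
  have hdvd' : g.map (IsLocalRing.residue ↥O) ∣ X ^ p - C x := by
    refine ⟨h.map (IsLocalRing.residue ↥O), ?_⟩
    rw [← Polynomial.map_mul, ← hgh, hred]
  refine key_div p x (g.map (IsLocalRing.residue ↥O)) (hgm.map _) ?_ ?_ hdvd'
  · rwa [hgm.natDegree_map]
  · rwa [hgm.natDegree_map]

/-- Let `(K, v)` be a (nontrivially) valued field of residue characteristic
`p > 0` such that `K` has no (finite) separable field extension of degree divisible by `p`.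
Then the residue field `Kv` is perfect, i.e. every element has a `p`-th root. -/
theorem residueField_perfect_of_no_separable_ext {K : Type u} [Field K]
    (O : ValuationSubring K) (p : ℕ) [Fact p.Prime]
    [CharP (IsLocalRing.ResidueField O) p]
    (hnontriv : ∃ c : K, c ≠ 0 ∧ O.valuation c < 1)
    (hsep : ∀ (L : Type u) [Field L] [Algebra K L] [Algebra.IsSeparable K L]
      [FiniteDimensional K L], ¬ p ∣ Module.finrank K L) :
    ∀ x : IsLocalRing.ResidueField O, ∃ y, y ^ p = x := by
  intro x
  have hp : p.Prime := Fact.out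
  by_cases hx0 : x = 0
  · exact ⟨0, by rw [hx0, zero_pow hp.ne_zero]⟩
  obtain ⟨a, ha⟩ := IsLocalRing.residue_surjective x
  have ha0 : a ≠ 0 := by
    intro h
    apply hx0
    rw [← ha, h, map_zero]
  by_cases hpK : (p : K) = 0
  · -- equal characteristic p
    obtain ⟨c, hc0, hc1⟩ := hnontriv
    have hcO : c ∈ O := O.mem_of_valuation_le_one c hc1.le
    set c' : ↥O := ⟨c, hcO⟩ with hc'
    have hcm : c' ∈ IsLocalRing.maximalIdeal ↥O := (O.valuation_lt_one_iff c').mpr hc1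
    have hcres : IsLocalRing.residue ↥O c' = 0 := Ideal.Quotient.eq_zero_iff_mem.mpr hcm
    set f : (↥O)[X] := X ^ p + (C c' * X - C a) with hf
    have hdlt : (C c' * X - C a).degree < (X ^ p : (↥O)[X]).degree := by
      rw [degree_X_pow]
      refine lt_of_le_of_lt (degree_sub_le _ _) ?_
      rw [max_lt_iff]
      constructor
      · refine lt_of_le_of_lt (degree_mul_le _ _) ?_
        refine lt_of_le_of_lt (add_le_add degree_C_le degree_X_le) ?_
        rw [zero_add]
        exact_mod_cast hp.one_lt
      · refine lt_of_le_of_lt degree_C_le ?_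
        exact_mod_cast hp.pos
    have hm : f.Monic := (monic_X_pow p).add_of_left hdlt
    have hdeg : f.natDegree = p := by
      have : f.degree = p := by
        rw [hf, degree_add_eq_left_of_degree_lt hdlt, degree_X_pow]
      exact natDegree_eq_of_degree_eq_some this
    refine main_aux O p hsep x f hm hdeg ?_ ?_
    · -- separability
      have hder : derivative (f.map (algebraMap (↥O) K)) = C c := by
        rw [hf]
        simp [Polynomial.map_add, Polynomial.map_sub, Polynomial.map_mul, Polynomial.map_pow,
          derivative_X_pow, hpK, ValuationSubring.algebraMap_apply, hc']
      rw [Polynomial.Separable, hder]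
      exact ⟨0, C c⁻¹, by rw [zero_mul, zero_add, ← C_mul, inv_mul_cancel₀ hc0, C_1]⟩
    · rw [hf]
      simp only [Polynomial.map_add, Polynomial.map_sub, Polynomial.map_mul,
        Polynomial.map_pow, map_X, map_C, hcres, ha, C_0, zero_mul, zero_sub]
      ring
  · -- mixed characteristic
    set f : (↥O)[X] := X ^ p - C a with hf
    have hm : f.Monic := monic_X_pow_sub_C a hp.ne_zero
    have hdeg : f.natDegree = p := by
      rw [hf, natDegree_X_pow_sub_C]
    refine main_aux O p hsep x f hm hdeg ?_ ?_
    · have haK : (algebraMap (↥O) K) a ≠ 0 := by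
        simpa [ValuationSubring.algebraMap_apply] using
          fun h => ha0 (Subtype.coe_injective (h : (a : K) = 0) : a = 0)
      have : f.map (algebraMap (↥O) K) = X ^ p - C ((algebraMap (↥O) K) a) := by
        rw [hf]; simp [Polynomial.map_sub, Polynomial.map_pow]
      rw [this]
      exact separable_X_pow_sub_C _ hpK haK
    · rw [hf]
      simp [Polynomial.map_sub, Polynomial.map_pow, ha]
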